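/- For every default theory Δ over a propositional language L there exists a prerequisite-free default theory Δ' over L that is equivalent to Δ, i.e., ext(Δ') = ext(Δ). -/

import Mathlib

/-- Propositional formulas over a set of atoms `α`. -/
inductive PropForm (α : Type) : Type
  | atom : α → PropForm α
  | fls  : PropForm α
  | impl : PropForm α → PropForm α → PropForm α

namespace PropForm

/-- Negation `¬φ`, definable as `φ → ⊥`. -/
def neg {α : Type} (φ : PropForm α) : PropForm α := impl φ fls

/-- Conjunction, definable from implication and falsum. -/
def conj {α : Type} (φ ψ : PropForm α) : PropForm α := (φ.impl ψ.neg).neg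

/-- Biimplication `φ ↔ ψ`. -/
def biimp {α : Type} (φ ψ : PropForm α) : PropForm α := conj (φ.impl ψ) (ψ.impl φ)

/-- Evaluation of a formula under a valuation of the atoms. -/
def eval {α : Type} (v : α → Prop) : PropForm α → Prop
  | atom a   => v a
  | fls      => False
  | impl φ ψ => eval v φ → eval v ψ

/-- Renaming/embedding of atoms. -/
def map {α β : Type} (f : α → β) : PropForm α → PropForm β
  | atom a   => atom (f a)
  | fls      => fls
  | impl φ ψ => impl (map f φ) (map f ψ)

end PropForm

/-- Classical propositional consequence operator. -/
def Cn {α : Type} (S : Set (PropForm α)) : Set (PropForm α) :=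
  {φ | ∀ v : α → Prop, (∀ ψ ∈ S, ψ.eval v) → φ.eval v}

/-- A theory: a set of formulas closed under propositional consequence. -/
def IsTheory {α : Type} (S : Set (PropForm α)) : Prop := Cn S ⊆ S

/-- A set of formulas is consistent if its consequences are not the whole language. -/
def Consistent {α : Type} (S : Set (PropForm α)) : Prop := Cn S ≠ Set.univ

/-- A default `α : Γ / β` with prerequisite, finite set of justifications, consequent. -/
structure Default (α : Type) where
  pre : PropForm α
  jus : Finset (PropForm α)
  con : PropForm α

/-- A default is applicable w.r.t. `S` if no justification's negation follows from `S`. -/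
def Default.Applicable {α : Type} (S : Set (PropForm α)) (d : Default α) : Prop :=
  ∀ γ ∈ d.jus, γ.neg ∉ Cn S

/-- The reduct of `D` w.r.t. `S`: the monotone rules `pre/con` of `S`-applicable defaults. -/
def Reduct {α : Type} (D : Set (Default α)) (S : Set (PropForm α)) :
    Set (PropForm α × PropForm α) :=
  {r | ∃ d ∈ D, d.Applicable S ∧ r = (d.pre, d.con)}

/-- `Cn^B(W)`: consequences of `W` in propositional calculus augmented with rules `B`;
the least set containing `W`, closed under `Cn`, and closed under the rules of `B`. -/
def CnRules {α : Type} (B : Set (PropForm α × PropForm α)) (W : Set (PropForm α)) :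
    Set (PropForm α) :=
  ⋂₀ {S | W ⊆ S ∧ Cn S ⊆ S ∧ ∀ r ∈ B, r.1 ∈ S → r.2 ∈ S}

/-- `S` is an extension of the default theory `(D, W)`. -/
def IsExtension {α : Type} (D : Set (Default α)) (W S : Set (PropForm α)) : Prop :=
  S = CnRules (Reduct D S) W

/-- The family of all extensions of `(D, W)`. -/
def ext {α : Type} (D : Set (Default α)) (W : Set (PropForm α)) : Set (Set (PropForm α)) :=
  {S | IsExtension D W S}

/-- A default is prerequisite-free if its prerequisite is a tautology. -/
def Default.PrereqFree {α : Type} (d : Default α) : Prop :=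
  d.pre ∈ Cn (∅ : Set (PropForm α))

/-- A default is normal if it has the form `α : {β} / β`. -/
def Default.Normal {α : Type} (d : Default α) : Prop := d.jus = {d.con}

section Basics

variable {α : Type}

lemma subset_Cn (X : Set (PropForm α)) : X ⊆ Cn X := by
  intro φ hφ v hv; exact hv φ hφ

lemma Cn_mono {X Y : Set (PropForm α)} (h : X ⊆ Y) : Cn X ⊆ Cn Y := by
  intro φ hφ v hv; exact hφ v (fun ψ hψ => hv ψ (h hψ))

lemma Cn_idem (X : Set (PropForm α)) : Cn (Cn X) ⊆ Cn X := by
  intro φ hφ v hv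
  exact hφ v (fun ψ hψ => hψ v hv)

/-- The canonical tautology `⊥ → ⊥`. -/
def taut : PropForm α := PropForm.impl PropForm.fls PropForm.fls

lemma taut_mem_Cn (X : Set (PropForm α)) : (taut : PropForm α) ∈ Cn X := by
  intro v _; simp [taut, PropForm.eval]

end Basics

section Compactness

variable {α : Type}

/-- Satisfiability of a set of formulas. -/
def Sat (X : Set (PropForm α)) : Prop := ∃ v : α → Prop, ∀ ψ ∈ X, ψ.eval v

/-- Finite satisfiability. -/
def FinSat (X : Set (PropForm α)) : Prop :=
  ∀ Y : Finset (PropForm α), ↑Y ⊆ X → Sat (↑Y : Set (PropForm α))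

/-- The list of atoms occurring in a formula. -/
def atomsList : PropForm α → List α
  | .atom a => [a]
  | .fls => []
  | .impl φ ψ => atomsList φ ++ atomsList ψ

lemma eval_congr {v w : α → Prop} :
    ∀ φ : PropForm α, (∀ a ∈ atomsList φ, v a ↔ w a) → (φ.eval v ↔ φ.eval w)
  | .atom a, h => by simpa [PropForm.eval, atomsList] using h a (by simp [atomsList])
  | .fls, _ => Iff.rfl
  | .impl φ ψ, h => by
      have h1 := eval_congr φ (fun a ha => h a (by simp [atomsList, ha]))
      have h2 := eval_congr ψ (fun a ha => h a (by simp [atomsList, ha]))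
      simp [PropForm.eval, h1, h2]

lemma Sat.mono {X Y : Set (PropForm α)} (h : Y ⊆ X) : Sat X → Sat Y :=
  fun ⟨v, hv⟩ => ⟨v, fun ψ hψ => hv ψ (h hψ)⟩

lemma FinSat.mono {X Y : Set (PropForm α)} (h : Y ⊆ X) : FinSat X → FinSat Y :=
  fun hX Z hZ => hX Z (hZ.trans h)

lemma finsat_extend {X : Set (PropForm α)} (hX : FinSat X) (a : α) :
    FinSat (insert (PropForm.atom a) X) ∨ FinSat (insert (PropForm.atom a).neg X) := by
  classical
  by_contra h
  push_neg at h
  obtain ⟨h1, h2⟩ := h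
  simp only [FinSat, not_forall] at h1 h2
  obtain ⟨Y₁, hY₁sub, hY₁⟩ := h1
  obtain ⟨Y₂, hY₂sub, hY₂⟩ := h2
  have hsub : ↑(Y₁.erase (PropForm.atom a) ∪ Y₂.erase (PropForm.atom a).neg) ⊆ X := by
    intro ψ hψ
    simp only [Finset.coe_union, Set.mem_union, Finset.coe_erase, Set.mem_diff,
      Finset.mem_coe, Finset.mem_erase, Set.mem_singleton_iff] at hψ
    rcases hψ with ⟨hmem, hne⟩ | ⟨hmem, hne⟩
    · rcases hY₁sub hmem with h1 | h1
      · exact absurd h1 hne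
      · exact h1
    · rcases hY₂sub hmem with h1 | h1
      · exact absurd h1 hne
      · exact h1
  obtain ⟨v, hv⟩ := hX _ hsub
  by_cases hva : v a
  · apply hY₁
    refine ⟨v, fun ψ hψ => ?_⟩
    by_cases hψa : ψ = PropForm.atom a
    · subst hψa; simpa [PropForm.eval]
    · exact hv ψ (by simp [Finset.mem_erase, hψ, hψa])
  · apply hY₂
    refine ⟨v, fun ψ hψ => ?_⟩
    by_cases hψa : ψ = (PropForm.atom a).neg
    · subst hψa; simpa [PropForm.eval, PropForm.neg]
    · exact hv ψ (by simp [Finset.mem_erase, hψ, hψa])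

variable [Denumerable α]

open Classical in
/-- Henkin-style chain of literal extensions of `X`. -/
noncomputable def Lset (X : Set (PropForm α)) : ℕ → Set (PropForm α)
  | 0 => X
  | n + 1 =>
      insert
        (if FinSat (insert (PropForm.atom (Denumerable.ofNat α n)) (Lset X n))
          then PropForm.atom (Denumerable.ofNat α n)
          else (PropForm.atom (Denumerable.ofNat α n)).neg)
        (Lset X n)

lemma Lset_mono {X : Set (PropForm α)} : ∀ {n m : ℕ}, n ≤ m → Lset X n ⊆ Lset X m := by
  intro n m h
  induction h with
  | refl => exact fun _ h => h
  | step _ ih => exact fun φ hφ => Set.mem_insert_iff.mpr (Or.inr (ih hφ))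

lemma Lset_finsat {X : Set (PropForm α)} (hX : FinSat X) : ∀ n, FinSat (Lset X n) := by
  intro n
  induction n with
  | zero => exact hX
  | succ n ih =>
    classical
    show FinSat (insert _ _)
    split
    · assumption
    · rcases finsat_extend ih (Denumerable.ofNat α n) with h | h
      · contradiction
      · exact h

open Classical in
/-- The valuation extracted from the Henkin chain. -/
noncomputable def henkinVal (X : Set (PropForm α)) : α → Prop :=
  fun a => FinSat (insert (PropForm.atom a) (Lset X (Encodable.encode a)))

open Classical in
lemma lit_mem_Lset (X : Set (PropForm α)) (a : α) :
    (if henkinVal X a then PropForm.atom a else (PropForm.atom a).neg)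
      ∈ Lset X (Encodable.encode a + 1) := by
  have : Denumerable.ofNat α (Encodable.encode a) = a := Denumerable.ofNat_encode a
  show _ ∈ insert _ _
  rw [this]
  exact Set.mem_insert_iff.mpr (Or.inl rfl)

lemma list_le_foldr_max (l : List ℕ) : ∀ x ∈ l, x ≤ l.foldr max 0 := by
  induction l with
  | nil => simp
  | cons y l ih =>
    intro x hx
    rcases List.mem_cons.mp hx with rfl | hx
    · exact le_max_left _ _
    · exact le_trans (ih x hx) (le_max_right _ _)

theorem finsat_sat {X : Set (PropForm α)} (hX : FinSat X) : Sat X := by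
  classical
  refine ⟨henkinVal X, fun ψ hψ => ?_⟩
  set v := henkinVal X with hv
  set N := ((atomsList ψ).map (fun a => Encodable.encode a + 1)).foldr max 0 with hN
  set lit : α → PropForm α :=
    fun a => if v a then PropForm.atom a else (PropForm.atom a).neg with hlit
  set Y : Finset (PropForm α) := insert ψ ((atomsList ψ).map lit).toFinset with hY
  have hYsub : ↑Y ⊆ Lset X N := by
    intro χ hχ
    simp only [hY, Finset.coe_insert, Set.mem_insert_iff, List.coe_toFinset,
      List.mem_map, Set.mem_setOf_eq] at hχ
    rcases hχ with rfl | ⟨a, ha, rfl⟩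
    · exact Lset_mono (Nat.zero_le N) hψ
    · refine Lset_mono ?_ (lit_mem_Lset X a)
      exact list_le_foldr_max _ _ (List.mem_map.mpr ⟨a, ha, rfl⟩)
  obtain ⟨w, hw⟩ := Lset_finsat hX N Y hYsub
  have hψY : ψ ∈ Y := by simp [hY]
  have hagree : ∀ a ∈ atomsList ψ, v a ↔ w a := by
    intro a ha
    have hlita : (lit a).eval w := hw (lit a) (by simp [hY]; right; exact ⟨a, ha, rfl⟩)
    by_cases hva : v a
    · simp only [hlit, if_pos hva, PropForm.eval] at hlita
      exact ⟨fun _ => hlita, fun _ => hva⟩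
    · simp only [hlit, if_neg hva, PropForm.neg, PropForm.eval] at hlita
      exact ⟨fun h => absurd h hva, fun h => absurd h hlita⟩
  exact (eval_congr ψ hagree).mpr (hw ψ hψY)

theorem Cn_compact {X : Set (PropForm α)} {φ : PropForm α} (h : φ ∈ Cn X) :
    ∃ Y : Finset (PropForm α), ↑Y ⊆ X ∧ φ ∈ Cn (↑Y : Set (PropForm α)) := by
  classical
  by_contra hc
  push_neg at hc
  have hfs : FinSat (insert φ.neg X) := by
    intro Z hZ
    have hZ' : ↑(Z.erase φ.neg) ⊆ X := by
      intro χ hχ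
      have hχ' : χ ∈ Z ∧ χ ≠ φ.neg := by
        simpa using Finset.mem_erase.mp hχ |>.symm
      rcases hZ hχ'.1 with h1 | h1
      · exact absurd h1 hχ'.2
      · exact h1
    have := hc (Z.erase φ.neg) hZ'
    simp only [Cn, Set.mem_setOf_eq] at this
    push_neg at this
    obtain ⟨v, hv, hvφ⟩ := this
    refine ⟨v, fun χ hχ => ?_⟩
    by_cases hχφ : χ = φ.neg
    · subst hχφ; simp [PropForm.neg, PropForm.eval]; exact hvφ
    · exact hv χ (by simp [Finset.mem_erase, hχφ, hχ])
  obtain ⟨v, hv⟩ := finsat_sat hfs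
  have hvX : ∀ ψ ∈ X, ψ.eval v := fun ψ hψ => hv ψ (Set.mem_insert_iff.mpr (Or.inr hψ))
  have := h v hvX
  have hneg := hv φ.neg (Set.mem_insert _ _)
  simp [PropForm.neg, PropForm.eval] at hneg
  exact hneg this

end Compactness
section Chains

variable {α : Type}

lemma CnRules_mem {B : Set (PropForm α × PropForm α)} {W : Set (PropForm α)} :
    CnRules B W ∈ {S | W ⊆ S ∧ Cn S ⊆ S ∧ ∀ r ∈ B, r.1 ∈ S → r.2 ∈ S} := by
  refine ⟨?_, ?_, ?_⟩
  · intro φ hφ S hS; exact hS.1 hφ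
  · intro φ hφ S hS
    exact hS.2.1 (Cn_mono (Set.sInter_subset_of_mem hS) hφ)
  · intro r hr h1 S hS
    exact hS.2.2 r hr (h1 S hS)

lemma CnRules_subset {B : Set (PropForm α × PropForm α)} {W S : Set (PropForm α)}
    (h1 : W ⊆ S) (h2 : Cn S ⊆ S) (h3 : ∀ r ∈ B, r.1 ∈ S → r.2 ∈ S) :
    CnRules B W ⊆ S :=
  Set.sInter_subset_of_mem ⟨h1, h2, h3⟩

lemma W_subset_CnRules {B : Set (PropForm α × PropForm α)} {W : Set (PropForm α)} :
    W ⊆ CnRules B W := CnRules_mem.1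

/-- Consequents of the defaults in a list. -/
def consSet (l : List (Default α)) : Set (PropForm α) := {φ | ∃ e ∈ l, e.con = φ}

lemma consSet_mono {l₁ l₂ : List (Default α)} (h : ∀ e ∈ l₁, e ∈ l₂) :
    consSet l₁ ⊆ consSet l₂ := by
  rintro φ ⟨e, he, rfl⟩; exact ⟨e, h e he, rfl⟩

/-- A grounded chain of defaults (in reverse chronological order): each default's
prerequisite follows from `W` together with the consequents of the later (in the list)
defaults. -/
def ChainP (W : Set (PropForm α)) : List (Default α) → Prop
  | [] => True
  | d :: l => ChainP W l ∧ d.pre ∈ Cn (W ∪ consSet l)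

lemma ChainP_append {W : Set (PropForm α)} :
    ∀ {l₁ l₂ : List (Default α)}, ChainP W l₁ → ChainP W l₂ → ChainP W (l₁ ++ l₂) := by
  intro l₁
  induction l₁ with
  | nil => intro l₂ _ h2; simpa using h2
  | cons d l ih =>
    intro l₂ h1 h2
    refine ⟨ih h1.1 h2, ?_⟩
    refine Cn_mono (Set.union_subset_union_right W (consSet_mono ?_)) h1.2
    intro e he; exact List.mem_append.mpr (Or.inl he)

/-- The union of the justification sets of the defaults in a list. -/
noncomputable def jusUnion (l : List (Default α)) : Finset (PropForm α) :=
  letI := Classical.decEq (PropForm α)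
  l.foldr (fun e s => e.jus ∪ s) ∅

lemma mem_jusUnion {l : List (Default α)} {γ : PropForm α} :
    γ ∈ jusUnion l ↔ ∃ e ∈ l, γ ∈ e.jus := by
  letI := Classical.decEq (PropForm α)
  induction l with
  | nil => simp [jusUnion]
  | cons d l ih =>
    simp only [jusUnion, List.foldr_cons, Finset.mem_union] at *
    simp [ih, List.mem_cons]

variable (D : Set (Default α)) (W : Set (PropForm α))

/-- The prerequisite-free translation of `D`: one default for each grounded chain
over `(D, W)` and each member of the chain, with the chain's pooled justifications. -/
def PFD : Set (Default α) :=
  {d' | ∃ l : List (Default α), ChainP W l ∧ (∀ e ∈ l, e ∈ D) ∧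
        ∃ d ∈ l, d' = ⟨taut, jusUnion l, d.con⟩}

lemma PFD_prereqFree : ∀ d' ∈ PFD D W, d'.PrereqFree := by
  rintro d' ⟨l, _, _, d, _, rfl⟩
  exact taut_mem_Cn ∅

/-- Consequents obtainable by `T`-applicable grounded chains. -/
def chainCons (T : Set (PropForm α)) : Set (PropForm α) :=
  {φ | ∃ l : List (Default α), ChainP W l ∧ (∀ e ∈ l, e ∈ D ∧ e.Applicable T) ∧
       φ ∈ consSet l}

end Chains
section Key

variable {α : Type} {D : Set (Default α)} {W T : Set (PropForm α)}

lemma chain_cons_mem_CnRules :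
    ∀ {l : List (Default α)}, ChainP W l → (∀ e ∈ l, e ∈ D) →
      (∀ e ∈ l, e.Applicable T) → ∀ e ∈ l, e.con ∈ CnRules (Reduct D T) W := by
  intro l
  induction l with
  | nil => intro _ _ _ e he; simp at he
  | cons d l ih =>
    intro hc hD happ e he
    have hl := ih hc.1 (fun e he => hD e (List.mem_cons_of_mem d he))
      (fun e he => happ e (List.mem_cons_of_mem d he))
    rcases List.mem_cons.mp he with rfl | he'
    · have hsub : W ∪ consSet l ⊆ CnRules (Reduct D T) W := by
        intro φ hφ
        rcases hφ with hφ | ⟨e', he', rfl⟩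
        · exact W_subset_CnRules hφ
        · exact hl e' he'
      have hpre : e.pre ∈ CnRules (Reduct D T) W :=
        CnRules_mem.2.1 (Cn_mono hsub hc.2)
      exact CnRules_mem.2.2 (e.pre, e.con)
        ⟨e, hD e List.mem_cons_self, happ e List.mem_cons_self, rfl⟩ hpre
    · exact hl e he'

lemma pfd_subset : CnRules (Reduct (PFD D W) T) W ⊆ CnRules (Reduct D T) W := by
  refine CnRules_subset W_subset_CnRules CnRules_mem.2.1 ?_
  rintro r ⟨d', ⟨l, hchain, hD, d, hdl, rfl⟩, happ, rfl⟩ _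
  refine chain_cons_mem_CnRules hchain hD ?_ d hdl
  intro e he γ hγ
  exact happ γ (mem_jusUnion.mpr ⟨e, he, hγ⟩)

lemma pfd_eq_cn_chainCons :
    CnRules (Reduct (PFD D W) T) W = Cn (W ∪ chainCons D W T) := by
  apply Set.Subset.antisymm
  · refine CnRules_subset ?_ (Cn_idem _) ?_
    · exact fun φ hφ => subset_Cn _ (Or.inl hφ)
    · rintro r ⟨d', ⟨l, hchain, hD, d, hdl, rfl⟩, happ, rfl⟩ _
      refine subset_Cn _ (Or.inr ⟨l, hchain, ?_, d, hdl, rfl⟩)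
      intro e he
      refine ⟨hD e he, fun γ hγ => happ γ (mem_jusUnion.mpr ⟨e, he, hγ⟩)⟩
  · have hsub : W ∪ chainCons D W T ⊆ CnRules (Reduct (PFD D W) T) W := by
      rintro φ (hφ | ⟨l, hchain, hDA, d, hdl, rfl⟩)
      · exact W_subset_CnRules hφ
      · have hd' : (⟨taut, jusUnion l, d.con⟩ : Default α) ∈ PFD D W :=
          ⟨l, hchain, fun e he => (hDA e he).1, d, hdl, rfl⟩
        refine CnRules_mem.2.2 (taut, d.con) ⟨⟨taut, jusUnion l, d.con⟩, hd', ?_, rfl⟩ ?_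
        · intro γ hγ
          obtain ⟨e, he, hγe⟩ := mem_jusUnion.mp hγ
          exact (hDA e he).2 γ hγe
        · exact CnRules_mem.2.1 (taut_mem_Cn _)
    intro φ hφ
    exact CnRules_mem.2.1 (Cn_mono hsub hφ)

lemma finset_chainCons_chain (s : Finset (PropForm α)) (hs : ↑s ⊆ chainCons D W T) :
    ∃ L : List (Default α), ChainP W L ∧ (∀ e ∈ L, e ∈ D ∧ e.Applicable T) ∧
      ↑s ⊆ consSet L := by
  classical
  induction s using Finset.induction_on with
  | empty => exact ⟨[], trivial, by simp, by simp⟩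
  | insert _ _ hx ih =>
    rename_i φ s'
    obtain ⟨L, hL, hLP, hLs⟩ := ih (fun x hx => hs (by simp [hx]))
    obtain ⟨l, hl, hlP, hφ⟩ := hs (Finset.mem_coe.mpr (Finset.mem_insert_self _ _))
    refine ⟨l ++ L, ChainP_append hl hL, ?_, ?_⟩
    · intro e he
      rcases List.mem_append.mp he with h | h
      · exact hlP e h
      · exact hLP e h
    · intro x hx'
      rcases Finset.mem_insert.mp hx' with rfl | h
      · exact consSet_mono (fun e he => List.mem_append.mpr (Or.inl he)) hφ
      · exact consSet_mono (fun e he => List.mem_append.mpr (Or.inr he)) (hLs h)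

variable [Denumerable α]

lemma pfd_supset : CnRules (Reduct D T) W ⊆ CnRules (Reduct (PFD D W) T) W := by
  classical
  refine CnRules_subset W_subset_CnRules CnRules_mem.2.1 ?_
  rintro r ⟨d, hdD, happ, rfl⟩ hpre
  rw [pfd_eq_cn_chainCons] at hpre
  obtain ⟨Y, hY, hpre'⟩ := Cn_compact hpre
  set s : Finset (PropForm α) := Y.filter (· ∈ chainCons D W T) with hsdef
  obtain ⟨L, hL, hLP, hLs⟩ := finset_chainCons_chain s
    (fun x hx => (Finset.mem_filter.mp hx).2)
  have hYsub : ↑Y ⊆ W ∪ consSet L := by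
    intro y hy
    by_cases hyc : y ∈ chainCons D W T
    · exact Or.inr (hLs (Finset.mem_filter.mpr ⟨hy, hyc⟩))
    · rcases hY hy with h | h
      · exact Or.inl h
      · exact absurd h hyc
  have hchain : ChainP W (d :: L) := ⟨hL, Cn_mono hYsub hpre'⟩
  have : d.con ∈ chainCons D W T := by
    refine ⟨d :: L, hchain, ?_, d, List.mem_cons_self, rfl⟩
    intro e he
    rcases List.mem_cons.mp he with rfl | h
    · exact ⟨hdD, happ⟩
    · exact hLP e h
  rw [pfd_eq_cn_chainCons]
  exact subset_Cn _ (Or.inr this)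

lemma pfd_key (T : Set (PropForm α)) :
    CnRules (Reduct (PFD D W) T) W = CnRules (Reduct D T) W :=
  Set.Subset.antisymm pfd_subset pfd_supset

end Key

/-- every default theory has an equivalent prerequisite-free default theory. -/
theorem prereq_free_equivalent {α : Type} [Denumerable α]
    (D : Set (Default α)) (W : Set (PropForm α)) :
    ∃ (D' : Set (Default α)) (W' : Set (PropForm α)),
      (∀ d ∈ D', d.PrereqFree) ∧ ext D' W' = ext D W := by
  refine ⟨PFD D W, W, PFD_prereqFree D W, ?_⟩
  ext T
  show IsExtension (PFD D W) W T ↔ IsExtension D W T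
  unfold IsExtension
  rw [pfd_key]
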